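/- Let K be a category, C a small category, φ : C → Set a weight, and S : C → PK a diagram; let S̄ : K^op → [C, Set] be the corresponding functor, S̄(A)(c) = S(c)(A) (it is pointwise small). Then the φ-weighted limit {φ, S} exists in PK if and only if the presheaf A ↦ {φ, S̄(A)} (the pointwise weighted limit) is a small presheaf, in which case this presheaf is the limit. Consequently, PK has all φ-weighted limits if and only if the presheaf A ↦ {φ, R(A)} is small for every small functor R : K^op → [C, Set]. -/

import Mathlib

open CategoryTheory CategoryTheory.Limits Opposite

universe w v v' u u'

/-- A functor `S : K ⥤ M` is (`w`-)small if it is the left Kan extension of its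
restriction to some small full subcategory of `K`. -/
def IsSmallFunctor {K : Type u} [Category.{v} K] {M : Type u'} [Category.{v'} M]
    (S : K ⥤ M) : Prop :=
  ∃ P : K → Prop, Small.{w} (Subtype P) ∧
    S.IsLeftKanExtension (𝟙 (ObjectProperty.ι P ⋙ S))

/-- Representable presheaves are small. -/
theorem isSmallFunctor_yoneda_obj {K : Type u} [Category.{v} K] (A : K) :
    IsSmallFunctor.{w} (yoneda.obj A) := by
  refine ⟨fun X => X = op A, ?_, ?_⟩
  · have : Subsingleton {X : Kᵒᵖ // X = op A} :=
      ⟨fun X Y => Subtype.ext (X.2.trans Y.2.symm)⟩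
    infer_instance
  · set P : Kᵒᵖ → Prop := fun X => X = op A with hP
    set ι := ObjectProperty.ι P with hι
    constructor
    refine ⟨IsInitial.ofUniqueHom (fun E => StructuredArrow.homMk
      (yonedaEquiv.symm (E.hom.app ⟨op A, rfl⟩ (𝟙 A))) ?_) ?_⟩
    · ext X f
      have hnat := types_congr_hom (E.hom.naturality
        (show (⟨op A, rfl⟩ : ObjectProperty.FullSubcategory P) ⟶ X from ObjectProperty.homMk f.op)) (𝟙 A)
      simp [yonedaEquiv_symm_app_apply, ι] at hnat ⊢
      exact hnat.symm
    · intro E m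
      apply StructuredArrow.hom_ext
      have hx := types_congr_hom (NatTrans.congr_app m.w ⟨op A, rfl⟩) (𝟙 A)
      have key : yonedaEquiv (m.right : yoneda.obj A ⟶ E.right) = E.hom.app ⟨op A, rfl⟩ (𝟙 A) := by
        exact hx
      exact (Equiv.eq_symm_apply _).mpr key

/-- The category of small presheaves on `K`. -/
abbrev SmallPresheaf (K : Type u) [Category.{v} K] : Type (max u (v + 1)) :=
  ObjectProperty.FullSubcategory (fun F : Kᵒᵖ ⥤ Type v => IsSmallFunctor.{v} F)

/-- The Yoneda embedding of `K` into its category of small presheaves. -/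
def smallYoneda (K : Type u) [Category.{v} K] : K ⥤ SmallPresheaf K where
  obj A := ⟨yoneda.obj A, isSmallFunctor_yoneda_obj A⟩
  map f := ObjectProperty.homMk (yoneda.map f)

/-- `L` is a limit of `S : C ⥤ A` weighted by `φ : C ⥤ Type v`, i.e. morphisms `a ⟶ L`
correspond, naturally in `a`, to natural transformations `φ ⟶ A(a, S-)`. -/
def IsWeightedLimit {C : Type u} [Category.{v} C] {A : Type u'} [Category.{v'} A]
    (φ : C ⥤ Type v) (S : C ⥤ A) (L : A) : Prop :=
  ∃ e : ∀ a : A, (a ⟶ L) ≃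
      ((φ ⋙ uliftFunctor.{v'}) ⟶ (S ⋙ coyoneda.obj (op a) ⋙ uliftFunctor.{v})),
    ∀ (a a' : A) (f : a' ⟶ a) (g : a ⟶ L) (c : C) (x : φ.obj c),
      (e a' (f ≫ g)).app c ⟨x⟩ = ⟨f ≫ ((e a g).app c ⟨x⟩).down⟩

/-- `L` is a colimit of `T : Cᵒᵖ ⥤ A` weighted by `φ : C ⥤ Type v`, i.e. morphisms `L ⟶ a`
correspond, naturally in `a`, to natural transformations `φ ⟶ A(T-, a)`. -/
def IsWeightedColimit {C : Type u} [Category.{v} C] {A : Type u'} [Category.{v'} A]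
    (φ : C ⥤ Type v) (T : Cᵒᵖ ⥤ A) (L : A) : Prop :=
  ∃ e : ∀ a : A, (L ⟶ a) ≃
      ((φ ⋙ uliftFunctor.{v'}) ⟶ (T.rightOp ⋙ yoneda.obj a ⋙ uliftFunctor.{v})),
    ∀ (a a' : A) (f : a ⟶ a') (g : L ⟶ a) (c : C) (x : φ.obj c),
      (e a' (g ≫ f)).app c ⟨x⟩ = ⟨((e a g).app c ⟨x⟩).down ≫ f⟩

/-- A class of weights with small domains. -/
def WeightClass : Type (v + 1) :=
  ∀ C : Cat.{v, v}, (C ⥤ Type v) → Prop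

/-- A category is `Φ`-complete if it has all `φ`-weighted limits for `φ ∈ Φ`. -/
def PhiComplete (Φ : WeightClass.{v}) (A : Type u) [Category.{v'} A] : Prop :=
  ∀ (C : Cat.{v, v}) (φ : C ⥤ Type v), Φ C φ →
    ∀ S : C ⥤ A, ∃ L : A, IsWeightedLimit φ S L

/-- A category is `Φ`-cocomplete if it has all `φ`-weighted colimits for `φ ∈ Φ`. -/
def PhiCocomplete (Φ : WeightClass.{v}) (A : Type u) [Category.{v'} A] : Prop :=
  ∀ (C : Cat.{v, v}) (φ : C ⥤ Type v), Φ C φ →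
    ∀ T : Cᵒᵖ ⥤ A, ∃ L : A, IsWeightedColimit φ T L

/-- A functor is `Φ`-continuous if it preserves all `φ`-weighted limits for `φ ∈ Φ`. -/
def PhiContinuous (Φ : WeightClass.{v}) {A : Type u} [Category.{v'} A]
    {B : Type u'} [Category.{w} B] (F : A ⥤ B) : Prop :=
  ∀ (C : Cat.{v, v}) (φ : C ⥤ Type v), Φ C φ →
    ∀ (S : C ⥤ A) (L : A), IsWeightedLimit φ S L → IsWeightedLimit φ (S ⋙ F) (F.obj L)

/-- The closure of a collection `P` of objects of `A` under `Φ`-weighted colimits. -/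
inductive PhiClosure (Φ : WeightClass.{v}) {A : Type u} [Category.{v'} A]
    (P : A → Prop) : A → Prop
  | base {X : A} (hX : P X) : PhiClosure Φ P X
  | colim {C : Cat.{v, v}} (φ : C ⥤ Type v) (hφ : Φ C φ) (T : Cᵒᵖ ⥤ A)
      (hT : ∀ c : Cᵒᵖ, PhiClosure Φ P (T.obj c)) {L : A}
      (hL : IsWeightedColimit φ T L) : PhiClosure Φ P L

/-- The smallness condition on a class of weights: for every small `C`, the closure of the
representables in the presheaf category of `C` under `Φ`-weighted colimits is small. -/
def SmallnessCondition (Φ : WeightClass.{v}) : Prop :=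
  ∀ C : Cat.{v, v}, EssentiallySmall.{v} (ObjectProperty.FullSubcategory (PhiClosure Φ
    (fun F : Cᵒᵖ ⥤ Type v => ∃ c : C, Nonempty (F ≅ yoneda.obj c))))

/-- The soundness condition on a class of weights: for every small `Φ`-complete `D` and every
`Φ`-continuous `ψ : D ⥤ Type v`, the weighted-colimit functor `ψ * (-) : [Dᵒᵖ, Type v] ⥤ Type v`
(i.e. the small-colimit-preserving extension of `ψ` along the Yoneda embedding) is
`Φ`-continuous. -/
def SoundnessCondition (Φ : WeightClass.{v}) : Prop :=
  ∀ D : Cat.{v, v}, PhiComplete Φ D → ∀ ψ : D ⥤ Type v, PhiContinuous Φ ψ →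
    ∀ T : (Dᵒᵖ ⥤ Type v) ⥤ Type v, PreservesColimitsOfSize.{v, v} T →
      Nonempty ((yoneda : D ⥤ _) ⋙ T ≅ ψ) → PhiContinuous Φ T

/-- `φ` belongs to the saturation of `Φ` if it lies in the closure of the representables
under `Φ`-weighted colimits in the presheaf category over its domain. -/
def InSaturation (Φ : WeightClass.{v}) (C : Cat.{v, v}) (φ : C ⥤ Type v) : Prop :=
  PhiClosure Φ (fun F : C ⥤ Type v => ∃ c : Cᵒᵖ, Nonempty (F ≅ coyoneda.obj c)) φ

/-- A category `J` is `α`-filtered when every diagram with fewer than `α` arrows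
admits a cocone. -/
def IsCardinalFiltered (J : Type u) [Category.{v'} J] (α : Cardinal.{v}) : Prop :=
  ∀ D : Cat.{v, v}, Cardinal.mk (Arrow D) < α → ∀ F : D ⥤ J, Nonempty (Cocone F)

/-- An object `X` is `α`-presentable when its hom-functor preserves `α`-filtered colimits. -/
def IsPresentableObj {K : Type u} [Category.{v} K] (α : Cardinal.{v}) (X : K) : Prop :=
  ∀ J : Cat.{v, v}, IsCardinalFiltered J α →
    PreservesColimitsOfShape J (coyoneda.obj (op X))

/-- `K` is locally `α`-presentable: it is cocomplete and has a small full subcategory of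
`α`-presentable objects such that every object is an `α`-filtered colimit of objects
from it. -/
def IsLocallyPresentableAt (K : Type u) [Category.{v} K] (α : Cardinal.{v}) : Prop :=
  HasColimitsOfSize.{v, v} K ∧ α.IsRegular ∧
    ∃ P : K → Prop, Small.{v} (Subtype P) ∧ (∀ X, P X → IsPresentableObj α X) ∧
      ∀ X : K, ∃ J : Cat.{v, v}, IsCardinalFiltered J α ∧
        ∃ (F : J ⥤ K) (c : Cocone F),
          (∀ j, P (F.obj j)) ∧ c.pt = X ∧ Nonempty (IsColimit c)

/-- `K` is locally presentable. -/
def IsLocallyPresentable (K : Type u) [Category.{v} K] : Prop :=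
  ∃ α : Cardinal.{v}, IsLocallyPresentableAt K α

/-- `PF : PK ⥤ PL` is the (essentially unique) functor sending a small presheaf `X` to the
left Kan extension of `X` along `Fᵒᵖ`. -/
def IsPshExtensionOf {K : Type u} {L : Type u'} [Category.{v} K] [Category.{v} L]
    (F : K ⥤ L) (PF : SmallPresheaf K ⥤ SmallPresheaf L) : Prop :=
  ∃ ε : ObjectProperty.ι (fun X : Kᵒᵖ ⥤ Type v => IsSmallFunctor.{v} X) ⟶
      PF ⋙ ObjectProperty.ι (fun X : Lᵒᵖ ⥤ Type v => IsSmallFunctor.{v} X) ⋙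
        (Functor.whiskeringLeft Kᵒᵖ Lᵒᵖ (Type v)).obj F.op,
    ∀ X : SmallPresheaf K, Functor.IsLeftKanExtension ((PF.obj X).obj) (ε.app X)

open MonoidalCategory in
/-- `D` is the Day convolution `∫^{A,B} K(-, A ⊗ B) × F A × G B` of the presheaves
`F` and `G`: it carries a universal wedge. -/
def IsDayConvolution {K : Type u} [Category.{v} K] [MonoidalCategory K]
    (F G D : Kᵒᵖ ⥤ Type v) : Prop :=
  ∃ u : ∀ A B : K, F.obj (op A) → G.obj (op B) → D.obj (op (A ⊗ B)),
    (∀ (A A' B B' : K) (f : A' ⟶ A) (g : B' ⟶ B) (x : F.obj (op A)) (y : G.obj (op B)),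
      u A' B' (F.map f.op x) (G.map g.op y)
        = D.map (MonoidalCategory.tensorHom f g).op (u A B x y)) ∧
    ∀ (H : Kᵒᵖ ⥤ Type v)
      (p : ∀ A B : K, F.obj (op A) → G.obj (op B) → H.obj (op (A ⊗ B))),
      (∀ (A A' B B' : K) (f : A' ⟶ A) (g : B' ⟶ B) (x : F.obj (op A)) (y : G.obj (op B)),
        p A' B' (F.map f.op x) (G.map g.op y)
          = H.map (MonoidalCategory.tensorHom f g).op (p A B x y)) →
      ∃! τ : D ⟶ H, ∀ (A B : K) (x : F.obj (op A)) (y : G.obj (op B)),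
        τ.app (op (A ⊗ B)) (u A B x y) = p A B x y

/-- The restricted Yoneda embedding of `M` into presheaves on the full subcategory of
`β`-presentable objects. -/
def restrictedYoneda (M : Type u) [Category.{v} M] (β : Cardinal.{v}) :
    M ⥤ ((ObjectProperty.FullSubcategory (IsPresentableObj β : M → Prop))ᵒᵖ ⥤ Type v) :=
  yoneda ⋙ (Functor.whiskeringLeft _ _ _).obj (ObjectProperty.ι _).op


/-- Universal property of left Kan extension along a full subcategory inclusion,
phrased as a bijectivity of restriction. -/
def ExtProp {K : Type u} [Category.{v} K] {M : Type u'} [Category.{v'} M]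
    (P : K → Prop) (S : K ⥤ M) : Prop :=
  ∀ G : K ⥤ M, Function.Bijective
    (fun β : S ⟶ G => Functor.whiskerLeft (ObjectProperty.ι P) β)

lemma isLKE_iff_extProp {K : Type u} [Category.{v} K] {M : Type u'} [Category.{v'} M]
    (P : K → Prop) (S : K ⥤ M) :
    S.IsLeftKanExtension (𝟙 (ObjectProperty.ι P ⋙ S)) ↔ ExtProp P S := by
  constructor
  · intro h G
    constructor
    · intro β₁ β₂ hβ
      exact Functor.hom_ext_of_isLeftKanExtension S (𝟙 _) β₁ β₂ (by
        simpa using hβ)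
    · intro γ
      refine ⟨Functor.descOfIsLeftKanExtension S (𝟙 _) G γ, ?_⟩
      have := Functor.descOfIsLeftKanExtension_fac S (𝟙 _) G γ
      simpa using this
  · intro hExt
    constructor
    refine ⟨IsInitial.ofUniqueHom (fun E => StructuredArrow.homMk
      ((hExt E.right).2 E.hom).choose ?_) ?_⟩
    · have := ((hExt E.right).2 E.hom).choose_spec
      exact (Category.id_comp _).trans this
    · intro E m
      apply StructuredArrow.hom_ext
      apply (hExt E.right).1
      have h1 := m.w
      have h2 := ((hExt E.right).2 E.hom).choose_spec
      show Functor.whiskerLeft (ObjectProperty.ι P) m.right =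
        Functor.whiskerLeft (ObjectProperty.ι P) (((hExt E.right).2 E.hom).choose)
      rw [show Functor.whiskerLeft (ObjectProperty.ι P) (((hExt E.right).2 E.hom).choose)
        = E.hom from h2]
      exact (Category.id_comp _).symm.trans (StructuredArrow.w m)

section JointSurj
variable {K : Type u} [Category.{v} K]

/-- If `F` satisfies the extension property w.r.t. `P`, then the maps from `P`-objects
are jointly surjective. -/
lemma jointSurj {P : K → Prop} {F : K ⥤ Type v} (hF : ExtProp P F)
    (X : K) (x : F.obj X) :
    ∃ (a : K) (_ : P a) (f : a ⟶ X) (y : F.obj a), F.map f y = x := by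
  classical
  set Q : ∀ (Z : K), F.obj Z → Prop := fun Z z =>
    ∃ (a : K) (_ : P a) (f : a ⟶ Z) (y : F.obj a), F.map f y = z with hQ
  have hQmap : ∀ {Z Z' : K} (g : Z ⟶ Z') (z : F.obj Z), Q Z z → Q Z' (F.map g z) := by
    rintro Z Z' g z ⟨a, ha, f, y, rfl⟩
    exact ⟨a, ha, f ≫ g, y, by rw [FunctorToTypes.map_comp_apply]⟩
  set r : ∀ Z : K, (F.obj Z × Bool) → (F.obj Z × Bool) → Prop :=
    fun Z p q => p.1 = q.1 ∧ Q Z p.1 with hr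
  set G : K ⥤ Type v :=
    { obj := fun Z => Quot (r Z)
      map := fun {Z Z'} g => TypeCat.ofHom (Quot.map (fun p : F.obj Z × Bool => (F.map g p.1, p.2))
        (by rintro ⟨z, b⟩ ⟨z', b'⟩ ⟨h1, h2⟩; dsimp at h1 h2 ⊢; subst h1
            exact ⟨rfl, hQmap g z h2⟩))
      map_id := by
        intro Z
        refine ConcreteCategory.hom_ext _ _ fun p => ?_
        induction p using Quot.ind with
        | _ p => simp [Quot.map]
      map_comp := by
        intro Z Z' Z'' g g'
        refine ConcreteCategory.hom_ext _ _ fun p => ?_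
        induction p using Quot.ind with
        | _ p => simp [Quot.map] } with hG
  have hib : (NatTrans.mk (F := F) (G := G) (fun Z => TypeCat.ofHom fun z => Quot.mk (r Z) (z, true))
        (fun {Z Z'} g => rfl))
      = (NatTrans.mk (fun Z => TypeCat.ofHom fun z => Quot.mk (r Z) (z, false)) (fun {Z Z'} g => rfl)) := by
    apply (hF G).1
    ext a z
    exact Quot.sound ⟨rfl, ⟨a.obj, a.property, 𝟙 a.obj, z, by simp⟩⟩
  have hq : Quot.mk (r X) (x, true) = Quot.mk (r X) (x, false) :=
    types_congr_hom (NatTrans.congr_app hib X) x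
  have h := congrArg (Quot.lift (fun p : F.obj X × Bool => (p.2 = true → Q X p.1))
    (by rintro ⟨z, b⟩ ⟨z', b'⟩ ⟨h1, h2⟩; dsimp at h1 h2 ⊢; subst h1
        exact propext ⟨fun _ _ => h2, fun _ _ => h2⟩)) hq
  have h' : (true = true → Q X x) = (false = true → Q X x) := h
  rw [eq_iff_iff] at h'
  exact h'.mpr (fun hh => by simp at hh) rfl

/-- Restriction along a larger full subcategory is injective. -/
lemma restrict_inj {Pc B : K → Prop} {F : K ⥤ Type v} (hF : ExtProp Pc F)
    (hsub : ∀ x, Pc x → B x) {H : ObjectProperty.FullSubcategory B ⥤ Type v}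
    (β₁ β₂ : ObjectProperty.ι B ⋙ F ⟶ H)
    (h : ∀ b : ObjectProperty.FullSubcategory B, Pc b.obj → β₁.app b = β₂.app b) : β₁ = β₂ := by
  refine NatTrans.ext (funext fun b => ConcreteCategory.hom_ext _ _ fun x => ?_)
  obtain ⟨a, ha, f, y, rfl⟩ := jointSurj hF b.obj x
  have n1 : β₁.app b (F.map f y) = H.map (show (⟨a, hsub a ha⟩ : ObjectProperty.FullSubcategory B) ⟶ b from ObjectProperty.homMk f)
      (β₁.app ⟨a, hsub a ha⟩ y) :=
    types_congr_hom (β₁.naturality (show (⟨a, hsub a ha⟩ : ObjectProperty.FullSubcategory B) ⟶ b from ObjectProperty.homMk f)) y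
  have n2 : β₂.app b (F.map f y) = H.map (show (⟨a, hsub a ha⟩ : ObjectProperty.FullSubcategory B) ⟶ b from ObjectProperty.homMk f)
      (β₂.app ⟨a, hsub a ha⟩ y) :=
    types_congr_hom (β₂.naturality (show (⟨a, hsub a ha⟩ : ObjectProperty.FullSubcategory B) ⟶ b from ObjectProperty.homMk f)) y
  rw [n1, n2, h ⟨a, hsub a ha⟩ ha]

end JointSurj

section Transport
variable {K : Type u} [Category.{v} K] {M : Type u'} [Category.{v'} M]

lemma extProp_of_iso {P : K → Prop} {F F' : K ⥤ M} (i : F ≅ F')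
    (hF : ExtProp P F) : ExtProp P F' := by
  intro G
  constructor
  · intro β₁ β₂ hβ
    have h1 : Functor.whiskerLeft (ObjectProperty.ι P) (i.hom ≫ β₁)
        = Functor.whiskerLeft (ObjectProperty.ι P) (i.hom ≫ β₂) := by
      ext a
      exact congrArg (fun t => i.hom.app ((ObjectProperty.ι P).obj a) ≫ t)
        (NatTrans.congr_app hβ a)
    have := (hF G).1 h1
    calc β₁ = i.inv ≫ (i.hom ≫ β₁) := by simp
    _ = i.inv ≫ (i.hom ≫ β₂) := by rw [this]
    _ = β₂ := by simp
  · intro γ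
    obtain ⟨β, hβ⟩ := (hF G).2 (Functor.whiskerLeft (ObjectProperty.ι P) i.hom ≫ γ)
    refine ⟨i.inv ≫ β, ?_⟩
    have : Functor.whiskerLeft (ObjectProperty.ι P) β
        = Functor.whiskerLeft (ObjectProperty.ι P) i.hom ≫ γ := hβ
    ext a
    have := NatTrans.congr_app this a
    simp only [Functor.whiskerLeft_app, NatTrans.comp_app] at this ⊢
    rw [this, ← Category.assoc]
    simp

variable {N : Type w} [Category.{v'} N]

universe u₁ v₁ in
/-- Hom-equivalence for postcomposition with a left adjoint. -/
def compAdjEquiv {J : Type u₁} [Category.{v₁} J] {E : M ⥤ N} {U : N ⥤ M}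
    (adj : E ⊣ U) (H : J ⥤ M) (G' : J ⥤ N) : (H ⋙ E ⟶ G') ≃ (H ⟶ G' ⋙ U) := by
  refine ⟨fun β => ⟨fun k => adj.homEquiv _ _ (β.app k), ?_⟩,
    fun γ => ⟨fun k => (adj.homEquiv _ _).symm (γ.app k), ?_⟩, ?_, ?_⟩
  · intro k k' f
    dsimp
    rw [← Adjunction.homEquiv_naturality_left, ← Adjunction.homEquiv_naturality_right]
    congr 1
    exact β.naturality f
  · intro k k' f
    dsimp
    rw [← Adjunction.homEquiv_naturality_left_symm, ← Adjunction.homEquiv_naturality_right_symm]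
    congr 1
    exact γ.naturality f
  · intro β; ext k; simp
  · intro γ; ext k; simp

lemma extProp_postcomp {P : K → Prop} {F : K ⥤ M} (hF : ExtProp P F)
    {E : M ⥤ N} {U : N ⥤ M} (adj : E ⊣ U) : ExtProp P (F ⋙ E) := by
  intro G
  have key : ∀ β : F ⋙ E ⟶ G,
      Functor.whiskerLeft (ObjectProperty.ι P) (compAdjEquiv adj F G β)
        = compAdjEquiv adj (ObjectProperty.ι P ⋙ F) (ObjectProperty.ι P ⋙ G)
            (Functor.whiskerLeft (ObjectProperty.ι P) β) := by
    intro β; ext a; rfl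
  constructor
  · intro β₁ β₂ hβ
    apply (compAdjEquiv adj F G).injective
    apply (hF (G ⋙ U)).1
    show Functor.whiskerLeft _ (compAdjEquiv adj F G β₁) = Functor.whiskerLeft _ (compAdjEquiv adj F G β₂)
    rw [key, key]
    exact congrArg _ hβ
  · intro γ
    obtain ⟨δ, hδ⟩ := (hF (G ⋙ U)).2
      ((compAdjEquiv adj (ObjectProperty.ι P ⋙ F) (ObjectProperty.ι P ⋙ G)) γ)
    refine ⟨(compAdjEquiv adj F G).symm δ, ?_⟩
    show Functor.whiskerLeft (ObjectProperty.ι P) ((compAdjEquiv adj F G).symm δ) = γ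
    apply (compAdjEquiv adj (ObjectProperty.ι P ⋙ F)
      (ObjectProperty.ι P ⋙ G)).injective
    have := key ((compAdjEquiv adj F G).symm δ)
    rw [← this, (compAdjEquiv adj F G).apply_symm_apply]
    exact hδ

end Transport

section Flip
variable {K : Type u} [Category.{v} K] {C : Type v} [Category.{v} C]

/-- If every component of `R : K ⥤ C ⥤ Type v` satisfies the extension property, then so
does `R`, with respect to the union of the subcategories. -/
lemma extProp_flip {R : K ⥤ C ⥤ Type v} {Pc : C → K → Prop}
    (hc : ∀ c : C, ExtProp (Pc c) (R.flip.obj c)) :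
    ExtProp (fun X => ∃ c : C, Pc c X) R := by
  classical
  set P : K → Prop := fun X => ∃ c : C, Pc c X with hPdef
  have hsub : ∀ c (X : K), Pc c X → P X := fun c X h => ⟨c, h⟩
  intro G
  constructor
  · intro θ₁ θ₂ hθ
    ext X c x
    have key : (NatTrans.mk (F := R.flip.obj c) (G := G.flip.obj c)
          (fun X => (θ₁.app X).app c)
          (fun {X X'} f => congrArg (fun t => t.app c) (θ₁.naturality f)))
        = NatTrans.mk (fun X => (θ₂.app X).app c)
          (fun {X X'} f => congrArg (fun t => t.app c) (θ₂.naturality f)) := by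
      apply (hc c (G.flip.obj c)).1
      ext a x
      exact types_congr_hom (congrArg (fun t => t.app c)
        (NatTrans.congr_app hθ ⟨a.obj, hsub c a.obj a.property⟩)) x
    exact types_congr_hom (congrArg (fun t => NatTrans.app t X) key) x
  · intro γ
    -- component of γ at c, restricted to the small subcategory for c
    set γc : ∀ c : C, ObjectProperty.ι (Pc c) ⋙ R.flip.obj c ⟶
        ObjectProperty.ι (Pc c) ⋙ G.flip.obj c := fun c =>
      { app := fun a => (γ.app ⟨a.obj, hsub c a.obj a.property⟩).app c
        naturality := fun a a' f => congrArg (fun t => t.app c)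
          (γ.naturality (show (⟨a.obj, hsub c a.obj a.property⟩ : ObjectProperty.FullSubcategory P) ⟶
            ⟨a'.obj, hsub c a'.obj a'.property⟩ from ObjectProperty.homMk f.hom)) } with hγcdef
    set θc : ∀ c : C, R.flip.obj c ⟶ G.flip.obj c :=
      fun c => ((hc c (G.flip.obj c)).2 (γc c)).choose with hθcdef
    have hθc : ∀ c, Functor.whiskerLeft (ObjectProperty.ι (Pc c)) (θc c) = γc c :=
      fun c => ((hc c (G.flip.obj c)).2 (γc c)).choose_spec
    -- Step A: θc agrees with γ on all of P
    have stepA : ∀ c : C, Functor.whiskerLeft (ObjectProperty.ι P) (θc c)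
        = NatTrans.mk (F := ObjectProperty.ι P ⋙ R.flip.obj c)
            (G := ObjectProperty.ι P ⋙ G.flip.obj c)
            (fun b => (γ.app b).app c)
            (fun {b b'} f => congrArg (fun t => t.app c) (γ.naturality f)) := by
      intro c
      apply restrict_inj (hc c) (hsub c)
      intro b hb
      have h1 := NatTrans.congr_app (hθc c) ⟨b.obj, hb⟩
      exact h1
    have stepA' : ∀ (c : C) (b : ObjectProperty.FullSubcategory P),
        (θc c).app b.obj = (γ.app b).app c :=
      fun c b => NatTrans.congr_app (stepA c) b
    -- Step B: naturality of θc in c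
    have stepB : ∀ {c c' : C} (h : c ⟶ c'),
        θc c ≫ G.flip.map h = R.flip.map h ≫ θc c' := by
      intro c c' h
      apply (hc c (G.flip.obj c')).1
      ext a x
      have hpa : P a.obj := hsub c a.obj a.property
      calc ((θc c ≫ G.flip.map h).app a.obj) x
          = (G.obj a.obj).map h ((γ.app ⟨a.obj, hpa⟩).app c x) := by
            show (G.obj a.obj).map h ((θc c).app a.obj x) = _
            rw [stepA' c ⟨a.obj, hpa⟩]
        _ = (γ.app ⟨a.obj, hpa⟩).app c' ((R.obj a.obj).map h x) :=
            (types_congr_hom ((γ.app ⟨a.obj, hpa⟩).naturality h) x).symm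
        _ = ((R.flip.map h ≫ θc c').app a.obj) x := by
            show _ = (θc c').app a.obj ((R.obj a.obj).map h x)
            rw [stepA' c' ⟨a.obj, hpa⟩]
    refine ⟨NatTrans.mk
      (fun X => NatTrans.mk (fun c => (θc c).app X)
        (fun {c c'} h => (congrArg (fun t => NatTrans.app t X) (stepB h)).symm))
      (fun {X X'} f => by
        ext c x
        exact types_congr_hom ((θc c).naturality f) x), ?_⟩
    ext b c x
    exact types_congr_hom (stepA' c b) x

end Flip

section Core
variable {K : Type u} [Category.{v} K] {C : Type v} [Category.{v} C]

/-- The pointwise weighted limit presheaf `A ↦ {φ, S̄ A}`. -/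
abbrev PtLimit (φ : C ⥤ Type v) (S : C ⥤ SmallPresheaf K) : Kᵒᵖ ⥤ Type v :=
  (S ⋙ ObjectProperty.ι
    (fun F : Kᵒᵖ ⥤ Type v => IsSmallFunctor.{v} F)).flip ⋙ coyoneda.obj (op φ)

/-- The Fubini-style bijection exhibiting the pointwise weighted limit presheaf as the
weighted limit. -/
def coreEquiv (φ : C ⥤ Type v) (S : C ⥤ SmallPresheaf K) (a : SmallPresheaf K) :
    (a.obj ⟶ PtLimit φ S) ≃
      ((φ ⋙ uliftFunctor.{max u v}) ⟶ (S ⋙ coyoneda.obj (op a) ⋙ uliftFunctor.{v})) where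
  toFun τ :=
    { app := fun c => TypeCat.ofHom fun u =>
        ⟨ObjectProperty.homMk
          { app := fun X => TypeCat.ofHom fun x => (τ.app X x).app c u.down
            naturality := fun {X X'} f => by
              refine ConcreteCategory.hom_ext _ _ fun x => ?_
              exact congrArg
                (fun t : φ ⟶ (S ⋙ ObjectProperty.ι
                    (fun F : Kᵒᵖ ⥤ Type v => IsSmallFunctor.{v} F)).flip.obj X' =>
                  t.app c u.down)
                (types_congr_hom (τ.naturality f) x) }⟩
      naturality := fun {c c'} h => by
        refine ConcreteCategory.hom_ext _ _ fun u => ?_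
        refine congrArg ULift.up (ObjectProperty.hom_ext _ (NatTrans.ext ?_))
        funext X
        refine ConcreteCategory.hom_ext _ _ fun x => ?_
        exact types_congr_hom ((τ.app X x).naturality h) u.down }
  invFun σ :=
    { app := fun X => TypeCat.ofHom fun x =>
        { app := fun c => TypeCat.ofHom fun u => ((σ.app c ⟨u⟩).down).hom.app X x
          naturality := fun {c c'} h => by
            refine ConcreteCategory.hom_ext _ _ fun u => ?_
            exact congrArg (fun t => t.down.hom.app X x) (types_congr_hom (σ.naturality h) ⟨u⟩) }
      naturality := fun {X X'} f => by
        refine ConcreteCategory.hom_ext _ _ fun x => ?_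
        refine NatTrans.ext ?_
        funext c
        refine ConcreteCategory.hom_ext _ _ fun u => ?_
        exact types_congr_hom ((σ.app c ⟨u⟩).down.hom.naturality f) x }
  left_inv τ := rfl
  right_inv σ := rfl

lemma isWeightedLimit_of_small (φ : C ⥤ Type v) (S : C ⥤ SmallPresheaf K)
    (h : IsSmallFunctor.{v} (PtLimit φ S)) :
    IsWeightedLimit φ S (⟨PtLimit φ S, h⟩ : SmallPresheaf K) := by
  refine ⟨fun a => (show (a ⟶ (⟨PtLimit φ S, h⟩ : SmallPresheaf K)) ≃ (a.obj ⟶ PtLimit φ S) from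
    ⟨fun f => f.hom, fun f => ObjectProperty.homMk f, fun _ => rfl, fun _ => rfl⟩).trans (coreEquiv φ S a), ?_⟩
  intro a a' f g c x
  refine congrArg ULift.up (ObjectProperty.hom_ext _ (NatTrans.ext ?_))
  funext X
  rfl

lemma yonedaEquiv_symm_natTrans {F G : Kᵒᵖ ⥤ Type v} (w : F ⟶ G) (A : K)
    (q : F.obj (op A)) :
    yonedaEquiv.symm (w.app (op A) q) = yonedaEquiv.symm q ≫ w := by
  exact (yonedaEquiv_symm_naturality_right A w q).symm

section Cmp
variable (φ : C ⥤ Type v) (S : C ⥤ SmallPresheaf K) (L : SmallPresheaf K)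
  (e : ∀ a : SmallPresheaf K, (a ⟶ L) ≃
    ((φ ⋙ uliftFunctor.{max u v}) ⟶ (S ⋙ coyoneda.obj (op a) ⋙ uliftFunctor.{v})))

/-- Comparison map from a weighted limit to the pointwise weighted limit presheaf. -/
def cmpToFun (X : Kᵒᵖ) (z : L.obj.obj X) : (PtLimit φ S).obj X where
  app c := TypeCat.ofHom fun u => yonedaEquiv
    (((e ((smallYoneda K).obj X.unop)
      (show (smallYoneda K).obj X.unop ⟶ L from ObjectProperty.homMk (yonedaEquiv.symm z))).app
        c ⟨u⟩).down.hom)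
  naturality {c c'} hcc := by
    refine ConcreteCategory.hom_ext _ _ fun u => ?_
    set g : (smallYoneda K).obj X.unop ⟶ L := ObjectProperty.homMk (yonedaEquiv.symm z) with hg
    have hn : (e ((smallYoneda K).obj X.unop) g).app c' ⟨φ.map hcc u⟩
        = ⟨((e ((smallYoneda K).obj X.unop) g).app c ⟨u⟩).down ≫ S.map hcc⟩ :=
      types_congr_hom ((e ((smallYoneda K).obj X.unop) g).naturality hcc) ⟨u⟩
    show yonedaEquiv (((e ((smallYoneda K).obj X.unop) g).app c' ⟨φ.map hcc u⟩).down.hom)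
      = ((S ⋙ ObjectProperty.ι
          (fun F : Kᵒᵖ ⥤ Type v => IsSmallFunctor.{v} F)).flip.obj X).map hcc
        (yonedaEquiv (((e ((smallYoneda K).obj X.unop) g).app c ⟨u⟩).down.hom))
    rw [hn]
    exact yonedaEquiv_comp _ _

/-- The natural transformation associated with an element of the pointwise weighted
limit presheaf. -/
def cmpSigma (X : Kᵒᵖ) (ν : (PtLimit φ S).obj X) :
    (φ ⋙ uliftFunctor.{max u v}) ⟶
      (S ⋙ coyoneda.obj (op ((smallYoneda K).obj X.unop)) ⋙ uliftFunctor.{v}) where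
  app c := TypeCat.ofHom fun u => ⟨show (smallYoneda K).obj X.unop ⟶ S.obj c from
    ObjectProperty.homMk (yonedaEquiv.symm (ν.app c u.down))⟩
  naturality {c c'} hcc := by
    refine ConcreteCategory.hom_ext _ _ fun u => ?_
    refine congrArg ULift.up (ObjectProperty.hom_ext _ ?_)
    have hν : ν.app c' (φ.map hcc u.down)
        = ((S ⋙ ObjectProperty.ι
            (fun F : Kᵒᵖ ⥤ Type v => IsSmallFunctor.{v} F)).map hcc).app X (ν.app c u.down) :=
      types_congr_hom (ν.naturality hcc) u.down
    show (yonedaEquiv.symm (ν.app c' (φ.map hcc u.down)) :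
        yoneda.obj X.unop ⟶ (S.obj c').obj) = _
    rw [hν]
    exact yonedaEquiv_symm_natTrans _ X.unop (ν.app c u.down)

/-- Inverse comparison map. -/
def cmpInvFun (X : Kᵒᵖ) (ν : (PtLimit φ S).obj X) : L.obj.obj X :=
  yonedaEquiv ((e ((smallYoneda K).obj X.unop)).symm (cmpSigma φ S X ν)).hom

lemma cmp_left_inv (X : Kᵒᵖ) (z : L.obj.obj X) :
    cmpInvFun φ S L e X (cmpToFun φ S L e X z) = z := by
  have hσ : cmpSigma φ S X (cmpToFun φ S L e X z)
      = e ((smallYoneda K).obj X.unop)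
          (show (smallYoneda K).obj X.unop ⟶ L from ObjectProperty.homMk (yonedaEquiv.symm z)) := by
    refine NatTrans.ext ?_
    funext c
    refine ConcreteCategory.hom_ext _ _ fun u => ?_
    refine congrArg ULift.up (ObjectProperty.hom_ext _ ?_)
    exact Equiv.symm_apply_apply yonedaEquiv _
  unfold cmpInvFun
  rw [hσ, Equiv.symm_apply_apply]
  exact Equiv.apply_symm_apply yonedaEquiv z

lemma cmp_right_inv (X : Kᵒᵖ) (ν : (PtLimit φ S).obj X) :
    cmpToFun φ S L e X (cmpInvFun φ S L e X ν) = ν := by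
  refine NatTrans.ext ?_
  funext c
  refine ConcreteCategory.hom_ext _ _ fun u => ?_
  show yonedaEquiv (((e ((smallYoneda K).obj X.unop)
      (show (smallYoneda K).obj X.unop ⟶ L from
        ObjectProperty.homMk (yonedaEquiv.symm (cmpInvFun φ S L e X ν)))).app c ⟨u⟩).down.hom)
      = ν.app c u
  unfold cmpInvFun
  have h1 : (show (smallYoneda K).obj X.unop ⟶ L from ObjectProperty.homMk (yonedaEquiv.symm
      (yonedaEquiv ((e ((smallYoneda K).obj X.unop)).symm (cmpSigma φ S X ν)).hom)))
      = (e ((smallYoneda K).obj X.unop)).symm (cmpSigma φ S X ν) :=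
    ObjectProperty.hom_ext _ (Equiv.symm_apply_apply _ _)
  refine (congrArg (fun g => yonedaEquiv
    ((e ((smallYoneda K).obj X.unop) g).app c ⟨u⟩).down.hom) h1).trans ?_
  show yonedaEquiv (((e ((smallYoneda K).obj X.unop)
      ((e ((smallYoneda K).obj X.unop)).symm (cmpSigma φ S X ν))).app c ⟨u⟩).down.hom) = ν.app c u
  rw [Equiv.apply_symm_apply]
  exact Equiv.apply_symm_apply yonedaEquiv (ν.app c u)

/-- If `S` admits a weighted limit, the pointwise weighted limit presheaf is small. -/
lemma small_of_isWeightedLimit {L : SmallPresheaf K} (h : IsWeightedLimit φ S L) :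
    IsSmallFunctor.{v} (PtLimit φ S) := by
  obtain ⟨e, he⟩ := h
  obtain ⟨P, hP, hLKE⟩ := L.property
  refine ⟨P, hP, (isLKE_iff_extProp _ _).2 ?_⟩
  refine extProp_of_iso ?_ ((isLKE_iff_extProp _ _).1 hLKE)
  refine NatIso.ofComponents (fun X => Equiv.toIso
    ⟨cmpToFun φ S L e X, cmpInvFun φ S L e X, cmp_left_inv φ S L e X,
      cmp_right_inv φ S L e X⟩) ?_
  intro X X' f
  refine ConcreteCategory.hom_ext _ _ fun z => ?_
  show cmpToFun φ S L e X' (L.obj.map f z) = (PtLimit φ S).map f (cmpToFun φ S L e X z)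
  refine NatTrans.ext ?_
  funext c
  refine ConcreteCategory.hom_ext _ _ fun u => ?_
  have hz : (show (smallYoneda K).obj X'.unop ⟶ L from
        ObjectProperty.homMk (yonedaEquiv.symm (L.obj.map f z)))
      = (show (smallYoneda K).obj X'.unop ⟶ (smallYoneda K).obj X.unop from
          (smallYoneda K).map f.unop) ≫
        (show (smallYoneda K).obj X.unop ⟶ L from ObjectProperty.homMk (yonedaEquiv.symm z)) :=
    ObjectProperty.hom_ext _ (yonedaEquiv_symm_map f z)
  show yonedaEquiv (((e ((smallYoneda K).obj X'.unop)
      (show (smallYoneda K).obj X'.unop ⟶ L from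
        ObjectProperty.homMk (yonedaEquiv.symm (L.obj.map f z)))).app
        c ⟨u⟩).down.hom)
    = ((S.obj c).obj.map f)
        (yonedaEquiv (((e ((smallYoneda K).obj X.unop)
          (show (smallYoneda K).obj X.unop ⟶ L from
            ObjectProperty.homMk (yonedaEquiv.symm z))).app c ⟨u⟩).down.hom))
  rw [hz, he]
  exact (yonedaEquiv_naturality _ _).symm

end Cmp

end Core


/-- For a weight `φ : C ⥤ Set` and a diagram `S : C ⥤ PK`, the weighted limit
`{φ, S}` exists in `PK` iff the pointwise weighted limit presheaf `A ↦ {φ, S̄ A}` is small,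
in which case that presheaf is the limit; consequently `PK` has all `φ`-weighted limits iff
`A ↦ {φ, R A}` is small for every small `R : Kᵒᵖ ⥤ [C, Set]`. -/
theorem statement2 {K : Type u} [Category.{v} K] (C : Cat.{v, v}) (φ : C ⥤ Type v) :
    (∀ S : C ⥤ SmallPresheaf K,
      ((∃ L, IsWeightedLimit φ S L) ↔
        IsSmallFunctor.{v}
          ((S ⋙ ObjectProperty.ι
            (fun F : Kᵒᵖ ⥤ Type v => IsSmallFunctor.{v} F)).flip ⋙ coyoneda.obj (op φ))) ∧
      (∀ h : IsSmallFunctor.{v}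
          ((S ⋙ ObjectProperty.ι
            (fun F : Kᵒᵖ ⥤ Type v => IsSmallFunctor.{v} F)).flip ⋙ coyoneda.obj (op φ)),
        IsWeightedLimit φ S ⟨_, h⟩)) ∧
    ((∀ S : C ⥤ SmallPresheaf K, ∃ L, IsWeightedLimit φ S L) ↔
      ∀ R : Kᵒᵖ ⥤ (C ⥤ Type v), IsSmallFunctor.{v} R →
        IsSmallFunctor.{v} (R ⋙ coyoneda.obj (op φ))) := by
  constructor
  · intro S
    refine ⟨⟨?_, ?_⟩, ?_⟩
    · rintro ⟨L, hL⟩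
      exact small_of_isWeightedLimit φ S hL
    · intro h
      exact ⟨⟨PtLimit φ S, h⟩, isWeightedLimit_of_small φ S h⟩
    · intro h
      exact isWeightedLimit_of_small φ S h
  · constructor
    · intro hall R hR
      obtain ⟨P, hPsmall, hLKE⟩ := hR
      have hExtR : ExtProp P R := (isLKE_iff_extProp _ _).1 hLKE
      have hcomp : ∀ c : C, IsSmallFunctor.{v} (R.flip.obj c) := fun c =>
        ⟨P, hPsmall, (isLKE_iff_extProp _ _).2
          (extProp_postcomp hExtR (evaluationAdjunctionLeft (Type v) c))⟩
      obtain ⟨L, hL⟩ := hall (ObjectProperty.lift _ R.flip hcomp)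
      exact small_of_isWeightedLimit φ (ObjectProperty.lift _ R.flip hcomp) hL
    · intro hsm S
      choose Pc hPcsmall hPcLKE using fun c : C => (S.obj c).property
      have hc : ∀ c : C, ExtProp (Pc c)
          (((S ⋙ ObjectProperty.ι
            (fun F : Kᵒᵖ ⥤ Type v => IsSmallFunctor.{v} F)).flip).flip.obj c) :=
        fun c => (isLKE_iff_extProp _ _).1 (hPcLKE c)
      have hR : ExtProp (fun X : Kᵒᵖ => ∃ c : C, Pc c X)
          ((S ⋙ ObjectProperty.ι
            (fun F : Kᵒᵖ ⥤ Type v => IsSmallFunctor.{v} F)).flip) := extProp_flip hc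
      haveI : ∀ c : C, Small.{v} (Subtype (Pc c)) := hPcsmall
      have hsub : Small.{v} (Subtype fun X : Kᵒᵖ => ∃ c : C, Pc c X) := by
        exact small_of_surjective (f := fun p : Σ c : C, Subtype (Pc c) =>
          (⟨p.2.1, ⟨p.1, p.2.2⟩⟩ : Subtype fun X : Kᵒᵖ => ∃ c : C, Pc c X))
          (by rintro ⟨X, c, hX⟩; exact ⟨⟨c, X, hX⟩, rfl⟩)
      have hsmallR : IsSmallFunctor.{v} ((S ⋙ ObjectProperty.ι
          (fun F : Kᵒᵖ ⥤ Type v => IsSmallFunctor.{v} F)).flip) :=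
        ⟨_, hsub, (isLKE_iff_extProp _ _).2 hR⟩
      have hPt := hsm _ hsmallR
      exact ⟨⟨_, hPt⟩, isWeightedLimit_of_small φ S hPt⟩
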